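/- Let G be an unweighted complete signed graph on a finite vertex set V with |V| = n, let 𝒞 be a clustering of V and T ≥ 0. Let 𝒞' be the clustering obtained from 𝒞 by dissolving every cluster of size at most T into singleton clusters (leaving all other clusters unchanged). Then dis(𝒞',G) ≤ dis(𝒞,G) + nT/2. -/

import Mathlib

open Finset

variable {V : Type*} [Fintype V] [DecidableEq V]

/-- The set of positive neighbors of `v`. -/
def Nplus (pos : V → V → Prop) [DecidableRel pos] (v : V) : Finset V :=
  Finset.univ.filter fun u => pos v u

/-- A node `v` is `lam`-good with respect to a set `C`. -/
def IsGood (pos : V → V → Prop) [DecidableRel pos] (lam : ℝ) (v : V) (C : Finset V) : Prop :=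
  (1 - lam) * (C.card : ℝ) ≤ ((Nplus pos v ∩ C).card : ℝ) ∧
    ((Nplus pos v ∩ (Finset.univ \ C)).card : ℝ) ≤ lam * (C.card : ℝ)

/-- A set `C` is `η`-clean if every node of `C` is `η`-good with respect to `C`. -/
def IsClean (pos : V → V → Prop) [DecidableRel pos] (η : ℝ) (C : Finset V) : Prop :=
  ∀ v ∈ C, IsGood pos η v C

/-- The cluster of `v` in the clustering given by the labeling `c`. -/
def cluster (c : V → ℕ) (v : V) : Finset V :=
  Finset.univ.filter fun u => c u = c v

/-- The disagreement of the clustering given by the labeling `c` on the unweighted complete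
signed graph with positive edges `pos`: the number of negative edges inside clusters plus
the number of positive edges between different clusters. -/
noncomputable def disU (pos : V → V → Prop) [DecidableRel pos] (c : V → ℕ) : ℝ :=
  ((Finset.univ.filter fun p : V × V => p.1 ≠ p.2 ∧
      ((c p.1 = c p.2 ∧ ¬ pos p.1 p.2) ∨ (c p.1 ≠ c p.2 ∧ pos p.1 p.2))).card : ℝ) / 2

theorem stmt9 {V : Type*} [Fintype V] [DecidableEq V]
    (pos : V → V → Prop) [DecidableRel pos]
    (hsymm : ∀ u v, pos u v → pos v u) (hirr : ∀ v, ¬ pos v v)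
    (n : ℕ) (hn : Fintype.card V = n)
    (c : V → ℕ) (T : ℝ) (hT : 0 ≤ T)
    (c' : V → ℕ)
    (hsmall : ∀ v : V, ((cluster c v).card : ℝ) ≤ T → cluster c' v = {v})
    (hbig : ∀ v : V, T < ((cluster c v).card : ℝ) → cluster c' v = cluster c v) :
    disU pos c' ≤ disU pos c + (n : ℝ) * T / 2 := by
  have hmem : ∀ (d : V → ℕ) (u v : V), u ∈ cluster d v ↔ d u = d v := by
    intro d u v; simp [cluster]
  set A := Finset.univ.filter fun p : V × V => p.1 ≠ p.2 ∧
      ((c p.1 = c p.2 ∧ ¬ pos p.1 p.2) ∨ (c p.1 ≠ c p.2 ∧ pos p.1 p.2)) with hA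
  set A' := Finset.univ.filter fun p : V × V => p.1 ≠ p.2 ∧
      ((c' p.1 = c' p.2 ∧ ¬ pos p.1 p.2) ∨ (c' p.1 ≠ c' p.2 ∧ pos p.1 p.2)) with hA'
  set S := Finset.univ.filter fun p : V × V => p.1 ≠ p.2 ∧ c p.1 = c p.2 ∧
      ((cluster c p.1).card : ℝ) ≤ T with hS
  -- on big clusters the relation is preserved
  have key : ∀ u v : V, ¬ ((cluster c u).card : ℝ) ≤ T → ¬ ((cluster c v).card : ℝ) ≤ T →
      (c' u = c' v ↔ c u = c v) := by
    intro u v hu hv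
    have hu' := hbig u (lt_of_not_ge hu)
    have hv' := hbig v (lt_of_not_ge hv)
    constructor
    · intro h
      have : u ∈ cluster c' v := (hmem c' u v).2 h
      rw [hv'] at this
      exact (hmem c u v).1 this
    · intro h
      have : u ∈ cluster c v := (hmem c u v).2 h
      rw [← hv'] at this
      exact (hmem c' u v).1 this
  -- if one endpoint is in a small cluster, the new labels differ
  have keysmall : ∀ u v : V, u ≠ v →
      (((cluster c u).card : ℝ) ≤ T ∨ ((cluster c v).card : ℝ) ≤ T) → c' u ≠ c' v := by
    intro u v hne hsm h
    rcases hsm with hsm | hsm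
    · have hu' := hsmall u hsm
      have : v ∈ cluster c' u := (hmem c' v u).2 h.symm
      rw [hu'] at this
      exact hne (Finset.mem_singleton.1 this).symm
    · have hv' := hsmall v hsm
      have : u ∈ cluster c' v := (hmem c' u v).2 h
      rw [hv'] at this
      exact hne (Finset.mem_singleton.1 this)
  -- clusters of equal labels coincide
  have hclEq : ∀ u v : V, c u = c v → cluster c u = cluster c v := by
    intro u v h
    ext x
    simp [cluster, h]
  have hsub : A' ⊆ A ∪ S := by
    intro p hp
    rw [hA'] at hp
    simp only [Finset.mem_filter, Finset.mem_univ, true_and] at hp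
    obtain ⟨hne, hdis⟩ := hp
    by_cases hbb : ¬ ((cluster c p.1).card : ℝ) ≤ T ∧ ¬ ((cluster c p.2).card : ℝ) ≤ T
    · -- both big
      have hkey := key p.1 p.2 hbb.1 hbb.2
      apply Finset.mem_union_left
      rw [hA]
      simp only [Finset.mem_filter, Finset.mem_univ, true_and]
      refine ⟨hne, ?_⟩
      rcases hdis with ⟨h, hnp⟩ | ⟨h, hpp⟩
      · exact Or.inl ⟨hkey.1 h, hnp⟩
      · exact Or.inr ⟨fun hc => h (hkey.2 hc), hpp⟩
    · have hsm : ((cluster c p.1).card : ℝ) ≤ T ∨ ((cluster c p.2).card : ℝ) ≤ T := by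
        by_contra h
        push_neg at h
        exact hbb ⟨fun h' => absurd h' (not_le.2 h.1), fun h' => absurd h' (not_le.2 h.2)⟩
      have hneq : c' p.1 ≠ c' p.2 := keysmall p.1 p.2 hne hsm
      have hpp : pos p.1 p.2 := by
        rcases hdis with ⟨h, _⟩ | ⟨_, hpp⟩
        · exact absurd h hneq
        · exact hpp
      by_cases hcc : c p.1 = c p.2
      · apply Finset.mem_union_right
        rw [hS]
        simp only [Finset.mem_filter, Finset.mem_univ, true_and]
        refine ⟨hne, hcc, ?_⟩
        rcases hsm with h | h
        · exact h
        · rw [hclEq p.1 p.2 hcc]; exact h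
      · apply Finset.mem_union_left
        rw [hA]
        simp only [Finset.mem_filter, Finset.mem_univ, true_and]
        exact ⟨hne, Or.inr ⟨hcc, hpp⟩⟩
  have hcard1 : (A'.card : ℝ) ≤ (A.card : ℝ) + (S.card : ℝ) := by
    have h1 : A'.card ≤ (A ∪ S).card := Finset.card_le_card hsub
    have h2 : (A ∪ S).card ≤ A.card + S.card := Finset.card_union_le A S
    exact_mod_cast le_trans h1 h2
  -- bound on S
  have hfib : S.card = ∑ u : V, (S.filter fun p => p.1 = u).card :=
    Finset.card_eq_sum_card_fiberwise (fun p _ => Finset.mem_univ p.1)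
  have hper : ∀ u : V, ((S.filter fun p => p.1 = u).card : ℝ) ≤ T := by
    intro u
    by_cases hsm : ((cluster c u).card : ℝ) ≤ T
    · have himg : (S.filter fun p => p.1 = u).card ≤ ((cluster c u).erase u).card := by
        apply Finset.card_le_card_of_injOn (fun p => p.2)
        · intro p hp
          simp only [Finset.mem_coe, hS, Finset.mem_filter, Finset.mem_univ, true_and] at hp
          obtain ⟨⟨hne, hcc, _⟩, h1⟩ := hp
          rw [Finset.mem_coe, Finset.mem_erase]
          subst h1
          exact ⟨fun h => hne h.symm, (hmem c p.2 p.1).2 hcc.symm⟩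
        · intro p hp q hq h
          simp only [Finset.mem_coe, Finset.mem_filter] at hp hq
          exact Prod.ext (hp.2.trans hq.2.symm) h
      have hle : (((cluster c u).erase u).card : ℝ) ≤ ((cluster c u).card : ℝ) := by
        exact_mod_cast Finset.card_le_card (Finset.erase_subset u _)
      calc ((S.filter fun p => p.1 = u).card : ℝ) ≤ (((cluster c u).erase u).card : ℝ) := by
              exact_mod_cast himg
        _ ≤ ((cluster c u).card : ℝ) := hle
        _ ≤ T := hsm
    · have hempty : (S.filter fun p => p.1 = u) = ∅ := by
        apply Finset.filter_eq_empty_iff.2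
        intro p hp h1
        simp only [hS, Finset.mem_filter, Finset.mem_univ, true_and] at hp
        exact hsm (h1 ▸ hp.2.2)
      rw [hempty]
      simpa using hT
  have hScard : (S.card : ℝ) ≤ (n : ℝ) * T := by
    calc (S.card : ℝ) = ∑ u : V, ((S.filter fun p => p.1 = u).card : ℝ) := by
          rw [hfib]; push_cast; ring
      _ ≤ ∑ _u : V, T := Finset.sum_le_sum fun u _ => hper u
      _ = (Fintype.card V : ℝ) * T := by rw [Finset.sum_const, Finset.card_univ]; ring
      _ = (n : ℝ) * T := by rw [hn]
  have hA'eq : disU pos c' = (A'.card : ℝ) / 2 := rfl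
  have hAeq : disU pos c = (A.card : ℝ) / 2 := rfl
  rw [hA'eq, hAeq]
  linarith
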